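/- Let n ≥ 4 and let p : Fin n → ℝ² be the circle placement p(i) = (cos(2πi/n), sin(2πi/n)). The number of unordered pairs {e, f} of distinct 2-element subsets e = {a,c}, f = {b,d} of Fin n such that the open segment between p(a) and p(c) intersects the open segment between p(b) and p(d) is exactly (n choose 4). (This is the paper's Lemma 1: the straight-line circle drawing of the complete graph K_n has exactly (n choose 4) crossings, the maximum over all graphs on n vertices.) -/

import Mathlib

/-- The circle placement: vertex `i` of `Fin n` is placed at the point
`(cos (2πi/n), sin (2πi/n))` of the unit circle in `ℝ²`. -/
noncomputable def circlePlacement (n : ℕ) : Fin n → ℝ × ℝ :=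
  fun i => (Real.cos (2 * Real.pi * (i : ℕ) / n), Real.sin (2 * Real.pi * (i : ℕ) / n))

namespace CircleCrossAux

/-- Twice the signed area of the triangle `P Q R`. -/
def cross (P Q R : ℝ × ℝ) : ℝ :=
  (Q.1 - P.1) * (R.2 - P.2) - (Q.2 - P.2) * (R.1 - P.1)

lemma sin_id (x y : ℝ) :
    Real.sin (2*x) + Real.sin (2*y) - Real.sin (2*x + 2*y)
      = 4 * Real.sin x * Real.sin y * Real.sin (x + y) := by
  simp only [Real.sin_add, Real.sin_two_mul, Real.cos_two_mul]
  linear_combination (-4*Real.sin x*Real.cos x) * (Real.sin_sq_add_cos_sq y)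
    + (-4*Real.sin y*Real.cos y) * (Real.sin_sq_add_cos_sq x)

lemma cross_sin (α β γ : ℝ) :
    cross (Real.cos α, Real.sin α) (Real.cos β, Real.sin β) (Real.cos γ, Real.sin γ)
      = Real.sin (γ - β) + Real.sin (β - α) - Real.sin (γ - α) := by
  simp only [cross, Real.sin_sub]; ring

lemma cross_formula (α β γ : ℝ) :
    cross (Real.cos α, Real.sin α) (Real.cos β, Real.sin β) (Real.cos γ, Real.sin γ)
      = 4 * Real.sin ((β - α)/2) * Real.sin ((γ - β)/2) * Real.sin ((γ - α)/2) := by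
  obtain ⟨a, rfl⟩ : ∃ a, α = 2*a := ⟨α/2, by ring⟩
  obtain ⟨b, rfl⟩ : ∃ b, β = 2*b := ⟨β/2, by ring⟩
  obtain ⟨c, rfl⟩ : ∃ c, γ = 2*c := ⟨γ/2, by ring⟩
  rw [cross_sin, show (2*b - 2*a)/2 = b - a from by ring,
    show (2*c - 2*b)/2 = c - b from by ring, show (2*c - 2*a)/2 = c - a from by ring]
  have h := sin_id (b - a) (c - b)
  rw [show 2*(b-a) = 2*b - 2*a from by ring, show 2*(c-b) = 2*c - 2*b from by ring,
    show (2*b - 2*a) + (2*c - 2*b) = 2*c - 2*a from by ring,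
    show (b-a) + (c-b) = c - a from by ring] at h
  linarith [h]

lemma cross_perm_swap12 (P Q R : ℝ × ℝ) : cross Q P R = - cross P Q R := by
  simp only [cross]; ring

lemma cross_perm_swap23 (P Q R : ℝ × ℝ) : cross P R Q = - cross P Q R := by
  simp only [cross]; ring

lemma cross_perm_swap13 (P Q R : ℝ × ℝ) : cross R Q P = - cross P Q R := by
  simp only [cross]; ring

lemma cross_perm_rot (P Q R : ℝ × ℝ) : cross Q R P = cross P Q R := by
  simp only [cross]; ring

lemma sin_half_pos {n : ℕ} {i j : Fin n} (hij : i < j) :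
    0 < Real.sin ((2 * Real.pi * (j:ℕ) / n - 2 * Real.pi * (i:ℕ) / n) / 2) := by
  have hn : (0:ℝ) < n := by
    have := i.2; exact_mod_cast Nat.pos_of_ne_zero (by omega)
  have hij' : ((i:ℕ):ℝ) < ((j:ℕ):ℝ) := by exact_mod_cast hij
  have hjn : ((j:ℕ):ℝ) < n := by exact_mod_cast j.2
  have hi0 : (0:ℝ) ≤ ((i:ℕ):ℝ) := by positivity
  rw [show (2 * Real.pi * (j:ℕ) / n - 2 * Real.pi * (i:ℕ) / n) / 2
      = Real.pi * (((j:ℕ):ℝ) - ((i:ℕ):ℝ)) / n from by ring]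
  apply Real.sin_pos_of_pos_of_lt_pi
  · have := Real.pi_pos
    exact div_pos (mul_pos this (by linarith)) hn
  · rw [div_lt_iff₀ hn]
    nlinarith [Real.pi_pos]

lemma or_pos {n : ℕ} {i j k : Fin n} (hij : i < j) (hjk : j < k) :
    0 < cross (circlePlacement n i) (circlePlacement n j) (circlePlacement n k) := by
  unfold circlePlacement
  rw [cross_formula]
  have h1 := sin_half_pos hij
  have h2 := sin_half_pos hjk
  have h3 := sin_half_pos (hij.trans hjk)
  have : (0:ℝ) < 4 := by norm_num
  exact mul_pos (mul_pos (mul_pos this h1) h2) h3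

attribute [local irreducible] circlePlacement

lemma or_ne {n : ℕ} {i j k : Fin n} (hij : i ≠ j) (hik : i ≠ k) (hjk : j ≠ k) :
    cross (circlePlacement n i) (circlePlacement n j) (circlePlacement n k) ≠ 0 := by
  rcases lt_trichotomy i j with h1 | h1 | h1
  · rcases lt_trichotomy j k with h2 | h2 | h2
    · exact ne_of_gt (or_pos h1 h2)
    · exact absurd h2 hjk
    · rcases lt_trichotomy i k with h3 | h3 | h3
      · exact ne_of_lt (by rw [cross_perm_swap23]; linarith [or_pos h3 h2])
      · exact absurd h3 hik
      · exact ne_of_gt (by rw [cross_perm_rot]; exact or_pos h3 h1)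
  · exact absurd h1 hij
  · rcases lt_trichotomy i k with h2 | h2 | h2
    · exact ne_of_lt (by rw [cross_perm_swap12]; linarith [or_pos h1 h2])
    · exact absurd h2 hik
    · rcases lt_trichotomy j k with h3 | h3 | h3
      · exact ne_of_gt (by rw [cross_perm_rot, cross_perm_rot]; exact or_pos h3 h2)
      · exact absurd h3 hjk
      · exact ne_of_lt (by rw [cross_perm_swap13]; linarith [or_pos h3 h1])

lemma cross_affine (A C B D : ℝ × ℝ) {u v : ℝ} (huv : u + v = 1) :
    cross A C (u • B + v • D) = u * cross A C B + v * cross A C D := by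
  have hv : v = 1 - u := by linarith
  subst hv
  simp only [cross, Prod.fst_add, Prod.snd_add, Prod.smul_fst, Prod.smul_snd, smul_eq_mul]
  ring

lemma cross_self_left (A C : ℝ × ℝ) : cross A C A = 0 := by simp [cross]
lemma cross_self_right (A C : ℝ × ℝ) : cross A C C = 0 := by simp [cross]; ring

lemma cross_zero_of_mem_openSegment {A C X : ℝ × ℝ} (h : X ∈ openSegment ℝ A C) :
    cross A C X = 0 := by
  obtain ⟨u, v, hu, hv, huv, hX⟩ := h
  rw [← hX, cross_affine _ _ _ _ huv, cross_self_left, cross_self_right]; ring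

/-- Two points strictly on the same side of line `A C` : no crossing. -/
lemma not_crossing_of_same_side {A C B D : ℝ × ℝ}
    (h : 0 < cross A C B * cross A C D) :
    ¬ (openSegment ℝ A C ∩ openSegment ℝ B D).Nonempty := by
  rintro ⟨X, hX1, hX2⟩
  have e1 : cross A C X = 0 := cross_zero_of_mem_openSegment hX1
  obtain ⟨u, v, hu, hv, huv, hX⟩ := hX2
  rw [← hX, cross_affine _ _ _ _ huv] at e1
  have h2 : (u * cross A C B + v * cross A C D) * cross A C B = 0 := by rw [e1]; ring
  nlinarith [h2, mul_pos hv h, mul_nonneg hu.le (sq_nonneg (cross A C B))]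

/-- Open segments sharing an endpoint meet only if the three points are collinear. -/
lemma cross_eq_zero_of_shared {A C D : ℝ × ℝ}
    (h : (openSegment ℝ A C ∩ openSegment ℝ A D).Nonempty) : cross A C D = 0 := by
  obtain ⟨X, hX1, hX2⟩ := h
  obtain ⟨u, v, hu, hv, huv, hX⟩ := hX1
  obtain ⟨u', v', hu', hv', huv', hX'⟩ := hX2
  have e : u • A + v • C = u' • A + v' • D := by rw [hX, hX']
  have e1 : u * A.1 + v * C.1 = u' * A.1 + v' * D.1 := congrArg Prod.fst e
  have e2 : u * A.2 + v * C.2 = u' * A.2 + v' * D.2 := congrArg Prod.snd e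
  have hv'0 : v' ≠ 0 := ne_of_gt hv'
  have f1 : v * (C.1 - A.1) = v' * (D.1 - A.1) := by
    linear_combination e1 - A.1 * huv + A.1 * huv'
  have f2 : v * (C.2 - A.2) = v' * (D.2 - A.2) := by
    linear_combination e2 - A.2 * huv + A.2 * huv'
  have key : v' * cross A C D = 0 := by
    simp only [cross]
    linear_combination (C.2 - A.2) * f1 - (C.1 - A.1) * f2
  exact (mul_eq_zero.mp key).resolve_left hv'0

lemma para_of_cross_zero {A C P : ℝ × ℝ} (hAC : A ≠ C) (h : cross A C P = 0) :
    ∃ r : ℝ, P = (1 - r) • A + r • C := by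
  simp only [cross] at h
  by_cases h1 : C.1 - A.1 = 0
  · have h2 : C.2 - A.2 ≠ 0 := by
      intro h2; exact hAC (Prod.ext (by linarith) (by linarith))
    refine ⟨(P.2 - A.2) / (C.2 - A.2), Prod.ext ?_ ?_⟩ <;>
      simp only [Prod.fst_add, Prod.snd_add, Prod.smul_fst, Prod.smul_snd, smul_eq_mul]
    · have h3 : (C.2 - A.2) * (P.1 - A.1) = 0 := by linear_combination -h + (P.2 - A.2) * h1
      have h4 := (mul_eq_zero.mp h3).resolve_left h2
      field_simp
      linarith
    · field_simp
      first | linear_combination h | linear_combination -h | ring1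
  · refine ⟨(P.1 - A.1) / (C.1 - A.1), Prod.ext ?_ ?_⟩ <;>
      simp only [Prod.fst_add, Prod.snd_add, Prod.smul_fst, Prod.smul_snd, smul_eq_mul]
    · field_simp
      first | linear_combination h | linear_combination -h | ring1
    · field_simp
      first | linear_combination h | linear_combination -h | ring1

/-- The crossing criterion: strictly opposite sides both ways gives a crossing. -/
lemma crossing_of_opposite_sides {A C B D : ℝ × ℝ}
    (h1 : cross A C B * cross A C D < 0) (h2 : cross B D A * cross B D C < 0) :
    (openSegment ℝ A C ∩ openSegment ℝ B D).Nonempty := by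
  have hACne : A ≠ C := by
    intro h; subst h; simp [cross] at h1
  set u := cross A C B with hu
  set v := cross A C D with hv
  have huvne : u - v ≠ 0 := by
    intro h; rw [sub_eq_zero] at h; rw [h] at h1; nlinarith [sq_nonneg v]
  set s := u / (u - v) with hs
  have hs0 : 0 < s := by
    rcases mul_neg_iff.mp h1 with ⟨h1a, h1b⟩ | ⟨h1a, h1b⟩
    · exact div_pos h1a (by linarith)
    · exact div_pos_of_neg_of_neg h1a (by linarith)
  have hs1 : s < 1 := by
    rw [hs, div_lt_one_iff]
    rcases mul_neg_iff.mp h1 with ⟨h1a, h1b⟩ | ⟨h1a, h1b⟩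
    · left; exact ⟨by linarith, by linarith⟩
    · right; right; exact ⟨by linarith, by linarith⟩
  set P := (1 - s) • B + s • D with hP
  have hPBD : P ∈ openSegment ℝ B D := ⟨1 - s, s, by linarith, hs0, by ring, rfl⟩
  have hPzero : cross A C P = 0 := by
    rw [hP, cross_affine _ _ _ _ (by ring : (1 - s) + s = 1), ← hu, ← hv, hs]
    field_simp
    ring
  obtain ⟨r, hr⟩ := para_of_cross_zero hACne hPzero
  have hBDP : cross B D P = 0 := by
    rw [hP, cross_affine _ _ _ _ (by ring : (1 - s) + s = 1),
      cross_self_left, cross_self_right]; ring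
  have heq : (1 - r) * cross B D A + r * cross B D C = 0 := by
    rw [← cross_affine _ _ _ _ (by ring : (1 - r) + r = 1), ← hr, hBDP]
  have hr01 : 0 < r ∧ r < 1 := by
    constructor <;>
      rcases mul_neg_iff.mp h2 with ⟨h2a, h2b⟩ | ⟨h2a, h2b⟩ <;> nlinarith
  exact ⟨P, ⟨1 - r, r, by linarith [hr01.2], hr01.1, by ring, hr.symm⟩, hPBD⟩

/-- Two crossing chords cannot share an endpoint. -/
lemma crossing_vertex_disjoint {n : ℕ} {a c b d : Fin n} (hac : a ≠ c) (hbd : b ≠ d)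
    (hne : ({a, c} : Finset (Fin n)) ≠ {b, d})
    (hCr : (openSegment ℝ (circlePlacement n a) (circlePlacement n c) ∩
      openSegment ℝ (circlePlacement n b) (circlePlacement n d)).Nonempty) :
    a ≠ b ∧ a ≠ d ∧ c ≠ b ∧ c ≠ d := by
  refine ⟨?_, ?_, ?_, ?_⟩
  · rintro rfl
    have hcd : c ≠ d := by intro h; exact hne (by rw [h])
    exact or_ne hac hbd hcd (cross_eq_zero_of_shared hCr)
  · rintro rfl
    rw [openSegment_symm ℝ (circlePlacement n b) (circlePlacement n a)] at hCr
    have hcb : c ≠ b := by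
      intro h; subst h; exact hne (Finset.pair_comm a c)
    exact or_ne hac (Ne.symm hbd) hcb (cross_eq_zero_of_shared hCr)
  · rintro rfl
    rw [openSegment_symm ℝ (circlePlacement n a) (circlePlacement n c)] at hCr
    have had : a ≠ d := by
      intro h; subst h; exact hne (Finset.pair_comm a c)
    exact or_ne (Ne.symm hac) hbd had (cross_eq_zero_of_shared hCr)
  · rintro rfl
    rw [openSegment_symm ℝ (circlePlacement n a) (circlePlacement n c), openSegment_symm ℝ (circlePlacement n b) (circlePlacement n c)] at hCr
    have hab : a ≠ b := by
      intro h; subst h; exact hne rfl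
    exact or_ne (Ne.symm hac) (Ne.symm hbd) hab (cross_eq_zero_of_shared hCr)

/-- The interleaved chords of a sorted quadruple cross. -/
lemma crossing_exists {n : ℕ} {w x y z : Fin n} (hwx : w < x) (hxy : x < y) (hyz : y < z) :
    (openSegment ℝ (circlePlacement n w) (circlePlacement n y) ∩
      openSegment ℝ (circlePlacement n x) (circlePlacement n z)).Nonempty := by
  have P1 := or_pos hwx hxy
  have P2 := or_pos hwx (hxy.trans hyz)
  have P3 := or_pos (hwx.trans hxy) hyz
  have P4 := or_pos hxy hyz
  apply crossing_of_opposite_sides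
  · have M1 : cross (circlePlacement n w) (circlePlacement n y) (circlePlacement n x) < 0 := by
      rw [cross_perm_swap23]; linarith
    exact mul_neg_of_neg_of_pos M1 P3
  · have M2 : 0 < cross (circlePlacement n x) (circlePlacement n z) (circlePlacement n w) := by
      rw [cross_perm_rot]; exact P2
    have M3 : cross (circlePlacement n x) (circlePlacement n z) (circlePlacement n y) < 0 := by
      rw [cross_perm_swap23]; linarith
    exact mul_neg_of_pos_of_neg M2 M3

set_option maxHeartbeats 4000000 in
/-- Uniqueness: a crossing pair on the vertex set `{w,x,y,z}` must be the interleaved one. -/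
lemma crossing_unique {n : ℕ} {w x y z : Fin n} (hwx : w < x) (hxy : x < y) (hyz : y < z)
    {a c b d : Fin n} (hac : a ≠ c) (hbd : b ≠ d)
    (hne : ({a, c} : Finset (Fin n)) ≠ {b, d})
    (hCr : (openSegment ℝ (circlePlacement n a) (circlePlacement n c) ∩
      openSegment ℝ (circlePlacement n b) (circlePlacement n d)).Nonempty)
    (huni : ({a, c} : Finset (Fin n)) ∪ {b, d} = {w, x, y, z}) :
    ({({a, c} : Finset (Fin n)), {b, d}} : Finset (Finset (Fin n)))
      = {{w, y}, {x, z}} := by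
  obtain ⟨hab, had, hcb, hcd⟩ := crossing_vertex_disjoint hac hbd hne hCr
  have P1 := or_pos hwx hxy
  have P2 := or_pos hwx (hxy.trans hyz)
  have P3 := or_pos (hwx.trans hxy) hyz
  have P4 := or_pos hxy hyz
  have N1 : cross (circlePlacement n x) (circlePlacement n w) (circlePlacement n y) < 0 := by
    rw [cross_perm_swap12]; linarith
  have N2 : cross (circlePlacement n x) (circlePlacement n w) (circlePlacement n z) < 0 := by
    rw [cross_perm_swap12]; linarith
  have Q1 : 0 < cross (circlePlacement n y) (circlePlacement n z) (circlePlacement n w) := by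
    rw [cross_perm_rot]; exact P3
  have Q2 : 0 < cross (circlePlacement n y) (circlePlacement n z) (circlePlacement n x) := by
    rw [cross_perm_rot]; exact P4
  have N3 : cross (circlePlacement n z) (circlePlacement n y) (circlePlacement n w) < 0 := by
    rw [cross_perm_swap12]; linarith
  have N4 : cross (circlePlacement n z) (circlePlacement n y) (circlePlacement n x) < 0 := by
    rw [cross_perm_swap12]; linarith
  have N5 : cross (circlePlacement n w) (circlePlacement n z) (circlePlacement n x) < 0 := by
    rw [cross_perm_swap23]; linarith
  have N6 : cross (circlePlacement n w) (circlePlacement n z) (circlePlacement n y) < 0 := by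
    rw [cross_perm_swap23]; linarith
  have Q3 : 0 < cross (circlePlacement n z) (circlePlacement n w) (circlePlacement n x) := by
    rw [cross_perm_rot, cross_perm_rot]; exact P2
  have Q4 : 0 < cross (circlePlacement n z) (circlePlacement n w) (circlePlacement n y) := by
    rw [cross_perm_rot, cross_perm_rot]; exact P3
  have Q5 : 0 < cross (circlePlacement n x) (circlePlacement n y) (circlePlacement n w) := by
    rw [cross_perm_rot]; exact P1
  have N7 : cross (circlePlacement n y) (circlePlacement n x) (circlePlacement n w) < 0 := by
    rw [cross_perm_swap12]; linarith
  have N8 : cross (circlePlacement n y) (circlePlacement n x) (circlePlacement n z) < 0 := by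
    rw [cross_perm_swap12]; linarith
  have NC1 := not_crossing_of_same_side (mul_pos P1 P2)
  have NC2 := not_crossing_of_same_side (mul_pos P2 P1)
  have NC3 := not_crossing_of_same_side (mul_pos_of_neg_of_neg N1 N2)
  have NC4 := not_crossing_of_same_side (mul_pos_of_neg_of_neg N2 N1)
  have NC5 := not_crossing_of_same_side (mul_pos Q1 Q2)
  have NC6 := not_crossing_of_same_side (mul_pos Q2 Q1)
  have NC7 := not_crossing_of_same_side (mul_pos_of_neg_of_neg N3 N4)
  have NC8 := not_crossing_of_same_side (mul_pos_of_neg_of_neg N4 N3)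
  have NC9 := not_crossing_of_same_side (mul_pos_of_neg_of_neg N5 N6)
  have NC10 := not_crossing_of_same_side (mul_pos_of_neg_of_neg N6 N5)
  have NC11 := not_crossing_of_same_side (mul_pos Q3 Q4)
  have NC12 := not_crossing_of_same_side (mul_pos Q4 Q3)
  have NC13 := not_crossing_of_same_side (mul_pos Q5 P4)
  have NC14 := not_crossing_of_same_side (mul_pos P4 Q5)
  have NC15 := not_crossing_of_same_side (mul_pos_of_neg_of_neg N7 N8)
  have NC16 := not_crossing_of_same_side (mul_pos_of_neg_of_neg N8 N7)
  have ha : a = w ∨ a = x ∨ a = y ∨ a = z := by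
    have : a ∈ ({w, x, y, z} : Finset (Fin n)) := by rw [← huni]; simp
    simpa using this
  have hc : c = w ∨ c = x ∨ c = y ∨ c = z := by
    have : c ∈ ({w, x, y, z} : Finset (Fin n)) := by rw [← huni]; simp
    simpa using this
  have hb : b = w ∨ b = x ∨ b = y ∨ b = z := by
    have : b ∈ ({w, x, y, z} : Finset (Fin n)) := by rw [← huni]; simp
    simpa using this
  have hd : d = w ∨ d = x ∨ d = y ∨ d = z := by
    have : d ∈ ({w, x, y, z} : Finset (Fin n)) := by rw [← huni]; simp
    simpa using this
  rcases ha with rfl | rfl | rfl | rfl <;> rcases hc with rfl | rfl | rfl | rfl <;>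
    try exact absurd rfl hac
  all_goals rcases hb with rfl | rfl | rfl | rfl <;> rcases hd with rfl | rfl | rfl | rfl <;>
    first
      | exact absurd rfl hbd
      | exact absurd rfl hab
      | exact absurd rfl had
      | exact absurd rfl hcb
      | exact absurd rfl hcd
      | exact absurd hCr NC1
      | exact absurd hCr NC2
      | exact absurd hCr NC3
      | exact absurd hCr NC4
      | exact absurd hCr NC5
      | exact absurd hCr NC6
      | exact absurd hCr NC7
      | exact absurd hCr NC8
      | exact absurd hCr NC9
      | exact absurd hCr NC10
      | exact absurd hCr NC11
      | exact absurd hCr NC12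
      | exact absurd hCr NC13
      | exact absurd hCr NC14
      | exact absurd hCr NC15
      | exact absurd hCr NC16
      | simp [Finset.pair_comm]

lemma exists_sorted4 {α : Type*} [LinearOrder α] [DecidableEq α] {t : Finset α} (h : t.card = 4) :
    ∃ w x y z : α, w < x ∧ x < y ∧ y < z ∧ t = {w, x, y, z} := by
  have hlen : (t.sort (· ≤ ·)).length = 4 := by
    rw [Finset.length_sort]; exact h
  have hsort := List.sortedLT_iff_pairwise.mp t.sortedLT_sort
  rcases e : t.sort (· ≤ ·) with _ | ⟨w, _ | ⟨x, _ | ⟨y, _ | ⟨z, _ | ⟨v, tl⟩⟩⟩⟩⟩ <;>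
    rw [e] at hlen <;> simp at hlen
  rw [e] at hsort
  simp [List.pairwise_cons] at hsort
  refine ⟨w, x, y, z, hsort.1.1, hsort.2.1.1, hsort.2.2, ?_⟩
  ext u
  rw [← Finset.mem_sort (α := α) (· ≤ ·), e]
  simp

end CircleCrossAux

open CircleCrossAux in
open scoped Classical in
/-- The straight-line circle drawing of the complete graph `K_n` has exactly
`n.choose 4` crossings: the number of unordered pairs `{e, f}` of distinct
2-element subsets `e = {a, c}`, `f = {b, d}` of `Fin n` whose open segments
`p a p c` and `p b p d` intersect is `n.choose 4`. -/
theorem circleDrawing_completeGraph_crossings (n : ℕ) (hn : 4 ≤ n) :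
    ((((Finset.univ : Finset (Fin n)).powersetCard 2).powersetCard 2).filter
      (fun s => ∃ a c b d : Fin n,
        s = {({a, c} : Finset (Fin n)), {b, d}} ∧
        (openSegment ℝ (circlePlacement n a) (circlePlacement n c) ∩
          openSegment ℝ (circlePlacement n b) (circlePlacement n d)).Nonempty)).card
      = n.choose 4 := by
  have hchoose : ((Finset.univ : Finset (Fin n)).powersetCard 4).card = n.choose 4 := by
    simp [Finset.card_powersetCard]
  rw [← hchoose]
  -- The common analysis of a member of the filtered set.
  have spec : ∀ s ∈ (((Finset.univ : Finset (Fin n)).powersetCard 2).powersetCard 2).filter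
      (fun s => ∃ a c b d : Fin n,
        s = {({a, c} : Finset (Fin n)), {b, d}} ∧
        (openSegment ℝ (circlePlacement n a) (circlePlacement n c) ∩
          openSegment ℝ (circlePlacement n b) (circlePlacement n d)).Nonempty),
      ∃ a c b d : Fin n, a ≠ c ∧ b ≠ d ∧ ({a, c} : Finset (Fin n)) ≠ {b, d} ∧
        s = {({a, c} : Finset (Fin n)), {b, d}} ∧
        (openSegment ℝ (circlePlacement n a) (circlePlacement n c) ∩
          openSegment ℝ (circlePlacement n b) (circlePlacement n d)).Nonempty ∧
        s.sup id = ({a, c} : Finset (Fin n)) ∪ {b, d} ∧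
        (s.sup id).card = 4 := by
    intro s hs
    rw [Finset.mem_filter] at hs
    obtain ⟨hs1, a, c, b, d, hsEq, hCr⟩ := hs
    rw [Finset.mem_powersetCard] at hs1
    obtain ⟨hsub, hcard2⟩ := hs1
    have hmemac : ({a, c} : Finset (Fin n)) ∈ s := by rw [hsEq]; simp
    have hmembd : ({b, d} : Finset (Fin n)) ∈ s := by rw [hsEq]; simp
    have hac : a ≠ c := by
      intro h
      have := hsub hmemac
      rw [Finset.mem_powersetCard] at this
      rw [h] at this
      simp at this
    have hbd : b ≠ d := by
      intro h
      have := hsub hmembd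
      rw [Finset.mem_powersetCard] at this
      rw [h] at this
      simp at this
    have hne : ({a, c} : Finset (Fin n)) ≠ {b, d} := by
      intro h
      rw [hsEq, h] at hcard2
      simp at hcard2
    obtain ⟨hab, had, hcb, hcd⟩ := crossing_vertex_disjoint hac hbd hne hCr
    have hsup : s.sup id = ({a, c} : Finset (Fin n)) ∪ {b, d} := by
      rw [hsEq]
      simp [Finset.sup_insert, Finset.sup_singleton]
    refine ⟨a, c, b, d, hac, hbd, hne, hsEq, hCr, hsup, ?_⟩
    rw [hsup, Finset.card_union_of_disjoint, Finset.card_pair hac, Finset.card_pair hbd]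
    rw [Finset.disjoint_left]
    intro e he1 he2
    simp only [Finset.mem_insert, Finset.mem_singleton] at he1 he2
    rcases he1 with rfl | rfl <;> rcases he2 with h' | h' <;>
      first | exact hab h' | exact had h' | exact hcb h' | exact hcd h'
  apply Finset.card_bij (fun s _ => s.sup id)
  · intro s hs
    obtain ⟨a, c, b, d, _, _, _, _, _, _, hcard4⟩ := spec s hs
    rw [Finset.mem_powersetCard]
    exact ⟨Finset.subset_univ _, hcard4⟩
  · intro s₁ hs₁ s₂ hs₂ hsup
    obtain ⟨a₁, c₁, b₁, d₁, hac₁, hbd₁, hne₁, hsEq₁, hCr₁, hsup₁, hcard₁⟩ := spec s₁ hs₁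
    obtain ⟨a₂, c₂, b₂, d₂, hac₂, hbd₂, hne₂, hsEq₂, hCr₂, hsup₂, hcard₂⟩ := spec s₂ hs₂
    obtain ⟨w, x, y, z, hwx, hxy, hyz, ht⟩ := exists_sorted4 hcard₁
    have h1 : s₁ = {({w, y} : Finset (Fin n)), {x, z}} := by
      rw [hsEq₁]
      exact crossing_unique hwx hxy hyz hac₁ hbd₁ hne₁ hCr₁ (by rw [← hsup₁]; exact ht)
    have h2 : s₂ = {({w, y} : Finset (Fin n)), {x, z}} := by
      rw [hsEq₂]
      exact crossing_unique hwx hxy hyz hac₂ hbd₂ hne₂ hCr₂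
        (by rw [← hsup₂, ← hsup]; exact ht)
    rw [h1, h2]
  · intro t ht
    rw [Finset.mem_powersetCard] at ht
    obtain ⟨w, x, y, z, hwx, hxy, hyz, hteq⟩ := exists_sorted4 ht.2
    have hwy : w ≠ y := ne_of_lt (hwx.trans hxy)
    have hxz : x ≠ z := ne_of_lt (hxy.trans hyz)
    have hpairne : ({w, y} : Finset (Fin n)) ≠ {x, z} := by
      intro h
      have : w ∈ ({x, z} : Finset (Fin n)) := by rw [← h]; simp
      simp only [Finset.mem_insert, Finset.mem_singleton] at this
      rcases this with h' | h'
      · exact absurd h' (ne_of_lt hwx)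
      · exact absurd h' (ne_of_lt ((hwx.trans hxy).trans hyz))
    refine ⟨{({w, y} : Finset (Fin n)), {x, z}}, ?_, ?_⟩
    · rw [Finset.mem_filter]
      constructor
      · rw [Finset.mem_powersetCard]
        constructor
        · intro e he
          simp only [Finset.mem_insert, Finset.mem_singleton] at he
          rw [Finset.mem_powersetCard]
          rcases he with rfl | rfl
          · exact ⟨Finset.subset_univ _, Finset.card_pair hwy⟩
          · exact ⟨Finset.subset_univ _, Finset.card_pair hxz⟩
        · exact Finset.card_pair hpairne
      · exact ⟨w, y, x, z, rfl, crossing_exists hwx hxy hyz⟩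
    · rw [hteq]
      simp only [Finset.sup_insert, Finset.sup_singleton, id]
      ext u
      simp only [Finset.sup_eq_union, Finset.mem_union, Finset.mem_insert, Finset.mem_singleton]
      tauto
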